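/- For all positive integers n and l, and every super edge-magic labeling f of K_{1,n} ∪ lK_1, the set of labels assigned to the leaves, {f(y_1), ..., f(y_n)}, is a set of n consecutive integers. -/

import Mathlib

/-- `f` is an edge-magic labeling of the graph `G` with valence `k`:
`f` is a bijection from `V(G) ∪ E(G)` onto `{1, …, p + q}` and
`f u + f v + f uv = k` for every edge `uv`. -/
def IsEdgeMagic {V : Type*} [Fintype V] (G : SimpleGraph V)
    (f : V ⊕ G.edgeSet → ℕ) (k : ℕ) : Prop :=
  Set.BijOn f Set.univ (Set.Icc 1 (Fintype.card V + G.edgeSet.ncard)) ∧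
  ∀ u v, ∀ h : G.Adj u v,
    f (Sum.inl u) + f (Sum.inl v) + f (Sum.inr ⟨s(u, v), G.mem_edgeSet.mpr h⟩) = k

/-- `f` is a super edge-magic labeling of `G` with valence `k`: an edge-magic
labeling whose vertex labels are exactly `{1, …, p}`. -/
def IsSuperEdgeMagic {V : Type*} [Fintype V] (G : SimpleGraph V)
    (f : V ⊕ G.edgeSet → ℕ) (k : ℕ) : Prop :=
  IsEdgeMagic G f k ∧ ∀ v, f (Sum.inl v) ∈ Set.Icc 1 (Fintype.card V)

/-- The graph `K_{1,n} ∪ lK_1`: the disjoint union of the star `K_{1,n}`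
(with center `0` and leaves `1, …, n`) and `l` isolated vertices
(`n+1, …, n+l`), on `n + l + 1` vertices. -/
def starUnion (n l : ℕ) : SimpleGraph (Fin (n + l + 1)) where
  Adj u v := (u = 0 ∧ v ≠ 0 ∧ (v : ℕ) ≤ n) ∨ (v = 0 ∧ u ≠ 0 ∧ (u : ℕ) ≤ n)
  symm := ⟨fun u v h => h.symm⟩
  loopless := ⟨fun v h => by rcases h with ⟨h1, h2, _⟩ | ⟨h1, h2, _⟩ <;> exact h2 h1⟩

/-- For all positive integers `n` and `l`, and every super edge-magic labeling
`f` of `K_{1,n} ∪ lK_1`, the set of labels assigned to the leaves is a set of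
`n` consecutive integers. -/
theorem stmt_11 (n l : ℕ) (hn : 1 ≤ n) (hl : 1 ≤ l)
    (f : Fin (n + l + 1) ⊕ (starUnion n l).edgeSet → ℕ) (k : ℕ)
    (hf : IsSuperEdgeMagic (starUnion n l) f k) :
    ∃ a : ℕ, {m | ∃ v : Fin (n + l + 1), v ≠ 0 ∧ (v : ℕ) ≤ n ∧ f (Sum.inl v) = m} =
      Set.Icc a (a + n - 1) := by
  obtain ⟨⟨⟨hmaps, hinj, hsurj⟩, hmagic⟩, hvert⟩ := hf
  have hinj' : Function.Injective f := fun a b h =>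
    hinj (Set.mem_univ a) (Set.mem_univ b) h
  set p := n + l + 1 with hp
  have hIcc : ∀ a b : ℕ, (Set.Icc a b).ncard = b + 1 - a := fun a b => by
    rw [← Finset.coe_Icc, Set.ncard_coe_finset, Nat.card_Icc]
  have hcard : Fintype.card (Fin (n + l + 1)) = p := by simp [hp]
  set L : Set (Fin (n + l + 1)) := {v | v ≠ 0 ∧ (v : ℕ) ≤ n} with hLdef
  have hvalL : Fin.val '' L = Set.Icc 1 n := by
    ext m
    constructor
    · rintro ⟨v, ⟨hv0, hvn⟩, rfl⟩
      refine ⟨?_, hvn⟩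
      rcases Nat.eq_zero_or_pos v.val with h | h
      · exact absurd (Fin.ext (by simp [h])) hv0
      · exact h
    · rintro ⟨h1, h2⟩
      refine ⟨⟨m, by omega⟩, ⟨?_, by simpa using h2⟩, rfl⟩
      simp [Fin.ext_iff]; omega
  have hLcard : L.ncard = n := by
    rw [← Set.ncard_image_of_injective L Fin.val_injective, hvalL, hIcc]
    omega
  have hedge : (starUnion n l).edgeSet = (fun v => s((0 : Fin (n + l + 1)), v)) '' L := by
    ext e
    induction e using Sym2.ind with
    | _ u v =>
      constructor
      · intro he
        rcases (SimpleGraph.mem_edgeSet _).mp he with ⟨h1, h2, h3⟩ | ⟨h1, h2, h3⟩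
        · exact ⟨v, ⟨h2, h3⟩, by rw [h1]⟩
        · exact ⟨u, ⟨h2, h3⟩, by rw [h1, Sym2.eq_swap]⟩
      · rintro ⟨w, ⟨h1, h2⟩, hw⟩
        exact hw ▸ (SimpleGraph.mem_edgeSet _).mpr (Or.inl ⟨rfl, h1, h2⟩)
  have hinjL : Set.InjOn (fun v => s((0 : Fin (n + l + 1)), v)) L := by
    rintro a ⟨ha0, _⟩ b ⟨hb0, _⟩ hab
    simp only [Sym2.eq, Sym2.rel_iff', Prod.mk.injEq, Prod.swap_prod_mk] at hab
    rcases hab with ⟨-, h⟩ | ⟨h1, h2⟩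
    · exact h
    · exact absurd h1.symm hb0
  have hEcard : (starUnion n l).edgeSet.ncard = n := by
    rw [hedge, Set.ncard_image_of_injOn hinjL, hLcard]
  have hN : Fintype.card (Fin (n + l + 1)) + (starUnion n l).edgeSet.ncard = p + n := by
    rw [hcard, hEcard]
  have hinlinj : Function.Injective (fun v : Fin (n + l + 1) => f (Sum.inl v)) :=
    fun a b h => Sum.inl.inj (hinj' h)
  have hVimg : (fun v : Fin (n + l + 1) => f (Sum.inl v)) '' Set.univ = Set.Icc 1 p := by
    apply Set.eq_of_subset_of_ncard_le
    · rintro m ⟨v, -, rfl⟩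
      have := hvert v
      rwa [hcard] at this
    · rw [Set.ncard_image_of_injective _ hinlinj, Set.ncard_univ, hIcc]
      simp [hp]
    · exact Set.finite_Icc _ _
  have hgmem : ∀ e : (starUnion n l).edgeSet,
      f (Sum.inr e) ∈ Set.Icc (p + 1) (p + n) := by
    intro e
    have h1 := hmaps (Set.mem_univ (Sum.inr e))
    rw [hN] at h1
    have h2 : f (Sum.inr e) ∉ Set.Icc 1 p := by
      intro hmem
      rw [← hVimg] at hmem
      obtain ⟨v, -, hv⟩ := hmem
      exact absurd (hinj' hv) (by simp)
    simp only [Set.mem_Icc] at h1 h2 ⊢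
    omega
  have hginj : Function.Injective
      (fun e : (starUnion n l).edgeSet => f (Sum.inr e)) := by
    intro a b h
    have := hinj' h
    exact Sum.inr.inj this
  have hgimg : (fun e : (starUnion n l).edgeSet => f (Sum.inr e)) '' Set.univ
      = Set.Icc (p + 1) (p + n) := by
    apply Set.eq_of_subset_of_ncard_le
    · rintro m ⟨e, -, rfl⟩
      exact hgmem e
    · rw [Set.ncard_image_of_injective _ hginj, Set.ncard_univ,
        Nat.card_coe_set_eq, hEcard, hIcc]
      omega
    · exact Set.finite_Icc _ _
  set f0 := f (Sum.inl (0 : Fin (n + l + 1))) with hf0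
  -- key bound on k
  have hkbound : f0 + p + n + 1 ≤ k := by
    have hmem : (p + n) ∈ Set.Icc (p + 1) (p + n) := by
      simp only [Set.mem_Icc]; omega
    rw [← hgimg] at hmem
    obtain ⟨e, -, he⟩ := hmem
    obtain ⟨v, ⟨hv0, hvn⟩, hev⟩ := hedge.subset e.2
    have adj : (starUnion n l).Adj 0 v := Or.inl ⟨rfl, hv0, hvn⟩
    have heq := hmagic 0 v adj
    have hee : (⟨s((0 : Fin (n + l + 1)), v),
        (SimpleGraph.mem_edgeSet _).mpr adj⟩ : (starUnion n l).edgeSet) = e :=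
      Subtype.ext hev
    have he' : f (Sum.inr e) = p + n := he
    rw [hee, he'] at heq
    have hv1 : 1 ≤ f (Sum.inl v) := (hvert v).1
    omega
  refine ⟨k - f0 - (p + n), ?_⟩
  ext m
  simp only [Set.mem_setOf_eq, Set.mem_Icc]
  constructor
  · rintro ⟨v, hv0, hvn, rfl⟩
    have adj : (starUnion n l).Adj 0 v := Or.inl ⟨rfl, hv0, hvn⟩
    have heq := hmagic 0 v adj
    have ht := hgmem ⟨s((0 : Fin (n + l + 1)), v), (SimpleGraph.mem_edgeSet _).mpr adj⟩
    simp only [Set.mem_Icc] at ht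
    omega
  · rintro ⟨h1, h2⟩
    have htmem : k - f0 - m ∈ Set.Icc (p + 1) (p + n) := by
      simp only [Set.mem_Icc]; omega
    rw [← hgimg] at htmem
    obtain ⟨e, -, he⟩ := htmem
    obtain ⟨v, ⟨hv0, hvn⟩, hev⟩ := hedge.subset e.2
    have adj : (starUnion n l).Adj 0 v := Or.inl ⟨rfl, hv0, hvn⟩
    have heq := hmagic 0 v adj
    have hee : (⟨s((0 : Fin (n + l + 1)), v),
        (SimpleGraph.mem_edgeSet _).mpr adj⟩ : (starUnion n l).edgeSet) = e :=
      Subtype.ext hev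
    have he' : f (Sum.inr e) = k - f0 - m := he
    rw [hee, he'] at heq
    exact ⟨v, hv0, hvn, by omega⟩
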